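/- arXiv:2112.07700 — 3 statements merged into one kernel-verified Lean document; each statement's English description precedes it below -/
import Mathlib

section
/- Let q, y, b be positive integers, g = gcd(q,y), and let a be an integer with gcd(a,q) = 1 and gcd(b,g) = 1. Set S := Σ_{r : 1 ≤ r ≤ q, gcd(r,q) = 1, r ≡ b (mod g)} e(ra/q). Then: (i) S = 0 if 1 < g < q and gcd(g, q/g) > 1; (ii) if 1 ≤ g < q and gcd(g, q/g) = 1, then S = μ(q/g) · e(abt/g), where ḡ denotes a multiplicative inverse of g modulo q/g and t is the integer determined by 1 − gḡ = (q/g)t; (iii) if g = q, then S = e(ab/q). -/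
noncomputable section

/-- `e(t) = e^{2πit}`. -/
def e2pi (t : ℝ) : ℂ := Complex.exp (2 * Real.pi * Complex.I * t)

lemma e2pi_add (x y : ℝ) : e2pi (x + y) = e2pi x * e2pi y := by
  rw [e2pi, e2pi, e2pi, ← Complex.exp_add]
  push_cast
  ring_nf

lemma e2pi_zero : e2pi 0 = 1 := by simp [e2pi]

lemma e2pi_int (n : ℤ) : e2pi n = 1 := by
  rw [e2pi, show (2 * Real.pi * Complex.I * ((n : ℝ) : ℂ)) = (n : ℂ) * (2 * Real.pi * Complex.I) by push_cast; ring]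
  exact Complex.exp_int_mul_two_pi_mul_I n

lemma e2pi_eq_one_iff {x : ℝ} : e2pi x = 1 ↔ ∃ n : ℤ, x = n := by
  rw [e2pi, Complex.exp_eq_one_iff]
  constructor
  · rintro ⟨n, hn⟩
    refine ⟨n, ?_⟩
    have h2 : (2 * (Real.pi:ℂ) * Complex.I) ≠ 0 := by
      simp [Real.pi_ne_zero, Complex.I_ne_zero]
    have := mul_right_cancel₀ h2 (by rw [← hn]; ring : (x:ℂ) * (2 * (Real.pi:ℂ) * Complex.I) = (n:ℂ) * (2 * (Real.pi:ℂ) * Complex.I))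
    exact_mod_cast this
  · rintro ⟨n, hn⟩
    exact ⟨n, by rw [hn]; push_cast; ring⟩

lemma e2pi_div_congr {N : ℕ} (hN : 0 < N) {n k : ℤ} (h : n ≡ k [ZMOD N]) :
    e2pi ((n : ℝ) / N) = e2pi ((k : ℝ) / N) := by
  obtain ⟨c, hc⟩ : (N : ℤ) ∣ (n - k) := Int.ModEq.dvd h.symm
  have hN' : (N : ℝ) ≠ 0 := Nat.cast_ne_zero.mpr hN.ne'
  have hn : n = k + N * c := by linarith
  have hx : (n : ℝ) / N = (k : ℝ) / N + (c : ℝ) := by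
    rw [hn]; push_cast; field_simp
  rw [hx, e2pi_add, e2pi_int, mul_one]

lemma geom_sum_e2pi (k : ℕ) (hk : 0 < k) (u : ℤ) (hu : Int.gcd u k = 1) :
    ∑ j ∈ Finset.range k, e2pi (((j : ℤ) * u : ℤ) / k) = if k = 1 then 1 else 0 := by
  rcases eq_or_lt_of_le (show 1 ≤ k from hk) with h1 | h1
  · simp only [← h1]
    norm_num
    simpa using e2pi_zero
  · rw [if_neg (by omega)]
    set G := ∑ j ∈ Finset.range k, e2pi (((j : ℤ) * u : ℤ) / k) with hG
    have key : e2pi ((u : ℝ) / k) * G = G := by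
      rw [hG, Finset.mul_sum]
      have step : ∀ j : ℕ, e2pi ((u : ℝ) / k) * e2pi (((j : ℤ) * u : ℤ) / k)
          = e2pi ((((j+1 : ℕ) : ℤ) * u : ℤ) / k) := by
        intro j
        rw [← e2pi_add]
        congr 1
        push_cast
        ring
      calc ∑ j ∈ Finset.range k, e2pi ((u : ℝ) / k) * e2pi (((j : ℤ) * u : ℤ) / k)
          = ∑ j ∈ Finset.range k, e2pi ((((j+1 : ℕ) : ℤ) * u : ℤ) / k) := by
            exact Finset.sum_congr rfl fun j _ => step j
        _ = ∑ j ∈ Finset.range (k+1), e2pi (((j : ℤ) * u : ℤ) / k) - e2pi (((0 : ℤ) * u : ℤ) / k) := by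
            rw [Finset.sum_range_succ']
            push_cast
            ring
        _ = G := by
            rw [Finset.sum_range_succ]
            have : e2pi (((k : ℤ) * u : ℤ) / k) = e2pi (((0 : ℤ) * u : ℤ) / k) := by
              refine e2pi_div_congr hk ?_
              simp [Int.ModEq]
            rw [this]
            ring
    have hne : e2pi ((u : ℝ) / k) ≠ 1 := by
      intro hone
      obtain ⟨n, hn⟩ := e2pi_eq_one_iff.mp hone
      have hk' : (k : ℝ) ≠ 0 := Nat.cast_ne_zero.mpr hk.ne'
      have : (u : ℝ) = n * k := by field_simp at hn; linarith
      have hdvd : (k : ℤ) ∣ u := ⟨n, by rw [mul_comm]; exact_mod_cast this⟩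
      have h2 : (k : ℤ) ∣ (Int.gcd u k : ℤ) := Int.dvd_coe_gcd hdvd dvd_rfl
      rw [hu] at h2
      have : (k : ℤ) ≤ 1 := Int.le_of_dvd one_pos h2
      omega
    have h0 : (e2pi ((u : ℝ) / k) - 1) * G = 0 := by
      rw [sub_mul, key, one_mul, sub_self]
    rcases mul_eq_zero.mp h0 with h | h
    · exact absurd (by linear_combination h : e2pi ((u : ℝ) / k) = 1) hne
    · exact h

open Finset ArithmeticFunction in
lemma ramanujan_range (m : ℕ) (hm : 0 < m) (u : ℤ) (hu : Int.gcd u m = 1) :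
    ∑ s ∈ (Finset.range m).filter (fun s => Nat.gcd s m = 1), e2pi (((s : ℤ) * u : ℤ) / m)
      = ((ArithmeticFunction.moebius m : ℤ) : ℂ) := by
  classical
  have hdvd_ind : ∀ n : ℕ, n ≠ 0 →
      ((∑ d ∈ n.divisors, (ArithmeticFunction.moebius d : ℤ) : ℤ) : ℂ)
        = if n = 1 then 1 else 0 := by
    intro n hn
    have : (∑ d ∈ n.divisors, (ArithmeticFunction.moebius d : ℤ))
        = (1 : ArithmeticFunction ℤ) n := by
      rw [← ArithmeticFunction.moebius_mul_coe_zeta, ArithmeticFunction.coe_mul_zeta_apply]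
    rw [this, ArithmeticFunction.one_apply]
    split <;> simp
  calc ∑ s ∈ (range m).filter (fun s => Nat.gcd s m = 1), e2pi (((s : ℤ) * u : ℤ) / m)
      = ∑ s ∈ range m, (if Nat.gcd s m = 1 then (1:ℂ) else 0) * e2pi (((s : ℤ) * u : ℤ) / m) := by
        rw [Finset.sum_filter]
        exact Finset.sum_congr rfl fun s _ => by split <;> simp
    _ = ∑ s ∈ range m, (∑ d ∈ m.divisors, if d ∣ s then ((moebius d : ℤ) : ℂ) else 0)
          * e2pi (((s : ℤ) * u : ℤ) / m) := by
        refine Finset.sum_congr rfl fun s _ => ?_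
        congr 1
        have hg0 : Nat.gcd s m ≠ 0 := Nat.gcd_ne_zero_right hm.ne'
        have hset : (Nat.gcd s m).divisors = m.divisors.filter (· ∣ s) := by
          ext d
          simp only [Nat.mem_divisors, Finset.mem_filter]
          constructor
          · rintro ⟨hd, _⟩
            exact ⟨⟨(Nat.dvd_gcd_iff.mp hd).2, hm.ne'⟩, (Nat.dvd_gcd_iff.mp hd).1⟩
          · rintro ⟨⟨hdm, _⟩, hds⟩
            exact ⟨Nat.dvd_gcd hds hdm, hg0⟩
        rw [show (if Nat.gcd s m = 1 then (1:ℂ) else 0)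
            = ((∑ d ∈ (Nat.gcd s m).divisors, (moebius d : ℤ) : ℤ) : ℂ) by
          rw [hdvd_ind _ hg0]]
        rw [hset, Finset.sum_filter]
        push_cast
        rfl
    _ = ∑ d ∈ m.divisors, ((moebius d : ℤ) : ℂ)
          * ∑ j ∈ range (m / d), e2pi (((j : ℤ) * u : ℤ) / (m / d : ℕ)) := by
        simp_rw [Finset.sum_mul, ite_mul, zero_mul]
        rw [Finset.sum_comm]
        refine Finset.sum_congr rfl fun d hd => ?_
        obtain ⟨hdm, hm0⟩ := Nat.mem_divisors.mp hd
        have hd0 : 0 < d := Nat.pos_of_dvd_of_pos hdm hm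
        rw [← Finset.sum_filter, Finset.mul_sum]
        refine Finset.sum_nbij' (fun s => s / d) (fun j => d * j) ?_ ?_ ?_ ?_ ?_
        · intro s hs
          simp only [Finset.mem_filter, Finset.mem_range] at hs ⊢
          exact Nat.div_lt_div_of_lt_of_dvd hdm hs.1
        · intro j hj
          simp only [Finset.mem_filter, Finset.mem_range] at hj ⊢
          constructor
          · calc d * j < d * (m / d) := by exact (Nat.mul_lt_mul_left hd0).mpr hj
              _ = m := Nat.mul_div_cancel' hdm
          · exact Dvd.intro j rfl
        · intro s hs
          simp only [Finset.mem_filter] at hs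
          exact Nat.mul_div_cancel' hs.2
        · intro j hj
          exact Nat.mul_div_cancel_left j hd0
        · intro s hs
          simp only [Finset.mem_filter, Finset.mem_range] at hs
          obtain ⟨hsm, hds⟩ := hs
          obtain ⟨j, rfl⟩ := hds
          rw [Nat.mul_div_cancel_left j hd0]
          congr 1
          have hmd : (m : ℝ) = (d : ℝ) * ((m / d : ℕ) : ℝ) := by
            exact_mod_cast (Nat.mul_div_cancel' hdm).symm
          push_cast
          rw [hmd]
          have hd' : (d : ℝ) ≠ 0 := Nat.cast_ne_zero.mpr hd0.ne'
          field_simp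
    _ = ∑ d ∈ m.divisors, if d = m then ((moebius d : ℤ) : ℂ) else 0 := by
        refine Finset.sum_congr rfl fun d hd => ?_
        obtain ⟨hdm, hm0⟩ := Nat.mem_divisors.mp hd
        have hd0 : 0 < d := Nat.pos_of_dvd_of_pos hdm hm
        have hmd0 : 0 < m / d := Nat.div_pos (Nat.le_of_dvd hm hdm) hd0
        have hcop : Int.gcd u (m / d : ℕ) = 1 := by
          have h1 : Nat.Coprime u.natAbs m := hu
          have h2 : (m / d) ∣ m := Nat.div_dvd_of_dvd hdm
          exact Nat.Coprime.coprime_dvd_right h2 h1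
        rw [geom_sum_e2pi _ hmd0 u hcop]
        have : m / d = 1 ↔ d = m := by
          constructor
          · intro h
            have h2 := Nat.mul_div_cancel' hdm
            rw [h, mul_one] at h2
            exact h2
          · rintro rfl
            exact Nat.div_self hm
        simp only [this]
        split <;> simp
    _ = ((moebius m : ℤ) : ℂ) := by
        rw [Finset.sum_ite_eq' m.divisors m (fun d => ((moebius d : ℤ) : ℂ))]
        rw [if_pos (Nat.mem_divisors_self m hm.ne')]

lemma natModEq_intCast {x y n : ℕ} (h : x % n = y % n) :
    (x : ℤ) ≡ (y : ℤ) [ZMOD (n : ℤ)] := Int.natCast_modEq_iff.mpr h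

lemma intModEq_natCast {x y n : ℕ} (h : (x : ℤ) ≡ (y : ℤ) [ZMOD (n : ℤ)]) :
    x % n = y % n := Int.natCast_modEq_iff.mp h

lemma natmod_intModEq (x n : ℕ) : ((x % n : ℕ) : ℤ) ≡ (x : ℤ) [ZMOD (n : ℤ)] :=
  natModEq_intCast (Nat.mod_mod_of_dvd x dvd_rfl)


/-- The sum `S = Σ_{1 ≤ r ≤ q, gcd(r,q)=1, r ≡ b (mod g)} e(ra/q)`, with `g = gcd(q,y)`. -/
def Ssum (q y b : ℕ) (a : ℤ) : ℂ :=
  ∑ r ∈ (Finset.Icc 1 q).filter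
      (fun r : ℕ => Nat.gcd r q = 1 ∧ r % Nat.gcd q y = b % Nat.gcd q y),
    e2pi (((r : ℤ) * a : ℤ) / (q : ℝ))


lemma coprime_add_iff (c q : ℕ) (H : ∀ p, p.Prime → p ∣ q → p ∣ c) (n : ℕ) :
    Nat.gcd (n + c) q = 1 ↔ Nat.gcd n q = 1 := by
  constructor
  · intro h
    by_contra h'
    obtain ⟨p, hp, hpd⟩ := Nat.exists_prime_and_dvd h'
    have hpn : p ∣ n := hpd.trans (Nat.gcd_dvd_left _ _)
    have hpq : p ∣ q := hpd.trans (Nat.gcd_dvd_right _ _)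
    have hpc : p ∣ c := H p hp hpq
    have : p ∣ Nat.gcd (n + c) q := Nat.dvd_gcd (Dvd.dvd.add hpn hpc) hpq
    rw [h] at this
    exact hp.one_lt.ne' (Nat.dvd_one.mp this)
  · intro h
    by_contra h'
    obtain ⟨p, hp, hpd⟩ := Nat.exists_prime_and_dvd h'
    have hpn : p ∣ n + c := hpd.trans (Nat.gcd_dvd_left _ _)
    have hpq : p ∣ q := hpd.trans (Nat.gcd_dvd_right _ _)
    have hpc : p ∣ c := H p hp hpq
    have hpn' : p ∣ n := by
      have := Nat.dvd_sub hpn hpc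
      simpa using this
    have : p ∣ Nat.gcd n q := Nat.dvd_gcd hpn' hpq
    rw [h] at this
    exact hp.one_lt.ne' (Nat.dvd_one.mp this)

/-- gcd is invariant under reduction mod q -/
lemma gcd_mod_left (r q : ℕ) : Nat.gcd (r % q) q = Nat.gcd r q := by
  rw [← Nat.gcd_rec, Nat.gcd_comm]

lemma Ssum_eq_range (q y b : ℕ) (hq : 0 < q) (a : ℤ) :
    Ssum q y b a = ∑ r ∈ (Finset.range q).filter
      (fun r => Nat.gcd r q = 1 ∧ r % Nat.gcd q y = b % Nat.gcd q y),
      e2pi (((r : ℤ) * a : ℤ) / q) := by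
  have hgdvd : Nat.gcd q y ∣ q := Nat.gcd_dvd_left q y
  rw [Ssum]
  refine Finset.sum_nbij' (fun r => r % q) (fun i => if i = 0 then q else i) ?_ ?_ ?_ ?_ ?_
  · intro r hr
    simp only [Finset.mem_filter, Finset.mem_Icc] at hr
    simp only [Finset.mem_filter, Finset.mem_range]
    exact ⟨Nat.mod_lt r hq, by rw [gcd_mod_left]; exact hr.2.1,
      by rw [Nat.mod_mod_of_dvd r hgdvd]; exact hr.2.2⟩
  · intro i hi
    simp only [Finset.mem_filter, Finset.mem_range] at hi
    simp only [Finset.mem_filter, Finset.mem_Icc]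
    by_cases h0 : i = 0
    · subst h0
      have hq1 : q = 1 := by simpa using hi.2.1
      refine ⟨⟨hq, le_refl q⟩, ?_, ?_⟩
      · rw [hq1]; simp
      · have h2 : Nat.gcd q y ∣ 1 := hq1 ▸ hgdvd
        rw [Nat.dvd_one.mp h2]
        omega
    · rw [if_neg h0]
      exact ⟨⟨Nat.pos_of_ne_zero h0, le_of_lt hi.1⟩, hi.2.1, hi.2.2⟩
  · intro r hr
    simp only [Finset.mem_filter, Finset.mem_Icc] at hr
    rcases eq_or_lt_of_le hr.1.2 with h | h
    · subst h
      simp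
    · have h1 : 1 ≤ r := hr.1.1
      have h0 : ¬ r = 0 := by omega
      simp [Nat.mod_eq_of_lt h, h0]
  · intro i hi
    simp only [Finset.mem_filter, Finset.mem_range] at hi
    by_cases h0 : i = 0
    · simp [h0]
    · simp only [if_neg h0]
      exact Nat.mod_eq_of_lt hi.1
  · intro r hr
    refine (e2pi_div_congr hq (Int.ModEq.mul_right a (natmod_intModEq r q))).symm

lemma case3 (q y b : ℕ) (hq : 0 < q) (a : ℤ) (hbq : Nat.gcd b q = 1)
    (hg : Nat.gcd q y = q) :
    Ssum q y b a = e2pi (((a * (b : ℤ) : ℤ) : ℝ) / (q : ℝ)) := by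
  rw [Ssum_eq_range q y b hq a, hg]
  have hset : (Finset.range q).filter (fun r => Nat.gcd r q = 1 ∧ r % q = b % q)
      = {b % q} := by
    ext r
    simp only [Finset.mem_filter, Finset.mem_range, Finset.mem_singleton]
    constructor
    · rintro ⟨h1, _, h3⟩
      rw [← h3, Nat.mod_eq_of_lt h1]
    · rintro rfl
      refine ⟨Nat.mod_lt _ hq, by rw [gcd_mod_left]; exact hbq, ?_⟩
      exact Nat.mod_mod_of_dvd b dvd_rfl
  rw [hset, Finset.sum_singleton]
  have h := (natmod_intModEq b q).mul_right a
  rw [show ((b : ℕ) : ℤ) * a = a * b from mul_comm _ _] at h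
  exact e2pi_div_congr hq h

open Finset in
theorem ramanujan_sum_on_progression (q y b : ℕ) (hq : 0 < q) (hy : 0 < y) (hb : 0 < b)
    (a : ℤ) (ha : Int.gcd a q = 1) (hbg : Nat.gcd b (Nat.gcd q y) = 1) :
    ((1 < Nat.gcd q y ∧ Nat.gcd q y < q ∧ 1 < Nat.gcd (Nat.gcd q y) (q / Nat.gcd q y)) →
        Ssum q y b a = 0) ∧
    ((Nat.gcd q y < q ∧ Nat.gcd (Nat.gcd q y) (q / Nat.gcd q y) = 1) →
        ∀ gbar t : ℤ,
          Int.ModEq ((q / Nat.gcd q y : ℕ) : ℤ) ((Nat.gcd q y : ℤ) * gbar) 1 →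
          1 - (Nat.gcd q y : ℤ) * gbar = ((q / Nat.gcd q y : ℕ) : ℤ) * t →
          Ssum q y b a =
            ((ArithmeticFunction.moebius (q / Nat.gcd q y) : ℤ) : ℂ) *
              e2pi (((a * (b : ℤ) * t : ℤ) : ℝ) / (Nat.gcd q y : ℝ))) ∧
    (Nat.gcd q y = q →
        Ssum q y b a = e2pi (((a * (b : ℤ) : ℤ) : ℝ) / (q : ℝ))) := by
  set g := Nat.gcd q y with hgdef
  set m := q / g with hmdef
  have hgdvd : g ∣ q := Nat.gcd_dvd_left q y
  have hg0 : 0 < g := Nat.gcd_pos_of_pos_left y hq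
  have hqm : g * m = q := Nat.mul_div_cancel' hgdvd
  have hm0 : 0 < m := Nat.div_pos (Nat.le_of_dvd hq hgdvd) hg0
  have hmdvd : m ∣ q := ⟨g, by rw [← hqm]; ring⟩
  have hSr := Ssum_eq_range q y b hq a
  rw [← hgdef] at hSr
  set F := (range q).filter (fun r => Nat.gcd r q = 1 ∧ r % g = b % g) with hF
  refine ⟨?_, ?_, fun hgeq => case3 q y b hq a (by rw [← hgeq]; exact hbg) hgeq⟩
  · -- Case (i)
    rintro ⟨h1g, hgq, hd⟩
    obtain ⟨p, hp, hpgm⟩ := Nat.exists_prime_and_dvd (by omega : Nat.gcd g m ≠ 1)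
    have hpg : p ∣ g := hpgm.trans (Nat.gcd_dvd_left _ _)
    have hpm : p ∣ m := hpgm.trans (Nat.gcd_dvd_right _ _)
    have hpq : p ∣ q := hpg.trans hgdvd
    set c := g * (m / p) with hcdef
    have hcp : c * p = q := by rw [hcdef, mul_assoc, Nat.div_mul_cancel hpm, hqm]
    have hc0 : 0 < c := by
      rcases Nat.eq_zero_or_pos c with h | h
      · rw [h, zero_mul] at hcp; omega
      · exact h
    have hgc : g ∣ c := Dvd.intro _ rfl
    have H : ∀ ℓ, ℓ.Prime → ℓ ∣ q → ℓ ∣ c := by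
      intro ℓ hℓ hℓq
      rw [← hqm] at hℓq
      rcases (Nat.Prime.dvd_mul hℓ).mp hℓq with h | h
      · exact h.trans hgc
      · by_cases hlp : ℓ = p
        · subst hlp; exact hpg.trans hgc
        · have h2 : ℓ ∣ p * (m / p) := by rw [Nat.mul_div_cancel' hpm]; exact h
          rcases (Nat.Prime.dvd_mul hℓ).mp h2 with h3 | h3
          · exact absurd ((Nat.prime_dvd_prime_iff_eq hℓ hp).mp h3) hlp
          · exact Dvd.dvd.mul_left h3 g
    have hmem : ∀ c' : ℕ, g ∣ c' → (∀ ℓ, ℓ.Prime → ℓ ∣ q → ℓ ∣ c') →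
        ∀ r ∈ F, (r + c') % q ∈ F := by
      intro c' hgc' H' r hr
      simp only [hF, Finset.mem_filter, Finset.mem_range] at hr ⊢
      refine ⟨Nat.mod_lt _ hq, ?_, ?_⟩
      · rw [gcd_mod_left]
        exact (coprime_add_iff c' q H' r).mpr hr.2.1
      · rw [Nat.mod_mod_of_dvd _ hgdvd]
        obtain ⟨k, rfl⟩ := hgc'
        rw [Nat.add_mul_mod_self_left]
        exact hr.2.2
    have hinv : ∀ (c1 c2 : ℕ), (c1 + c2) % q = 0 → ∀ s ∈ F, ((s + c1) % q + c2) % q = s := by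
      intro c1 c2 hcc s hs
      have hsq : s < q := by
        simp only [hF, Finset.mem_filter, Finset.mem_range] at hs
        exact hs.1
      have h1 : ((s + c1) % q + c2) % q = (s + c1 + c2) % q :=
        Nat.ModEq.add_right c2 (Nat.mod_modEq (s + c1) q)
      rw [h1, add_assoc, Nat.add_mod, hcc, add_zero, Nat.mod_mod_of_dvd s dvd_rfl,
        Nat.mod_eq_of_lt hsq]
    have hcq : (c + c * (q - 1)) % q = 0 := by
      have h1 : 1 + (q - 1) = q := by omega
      have h2 : c + c * (q - 1) = c * q := by
        calc c + c * (q - 1) = c * (1 + (q - 1)) := by ring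
          _ = c * q := by rw [h1]
      rw [h2, Nat.mul_mod_left]
    have hshift : ∑ r ∈ F, e2pi (((((r + c) % q : ℕ) : ℤ) * a : ℤ) / (q : ℝ))
        = ∑ r ∈ F, e2pi ((((r : ℕ) : ℤ) * a : ℤ) / (q : ℝ)) := by
      refine Finset.sum_nbij' (fun r => (r + c) % q) (fun r => (r + c * (q - 1)) % q)
        (fun r hr => hmem c hgc H r hr)
        (fun r hr => hmem (c * (q - 1)) (hgc.mul_right _)
          (fun ℓ hℓ hℓq => (H ℓ hℓ hℓq).mul_right _) r hr)
        (fun r hr => hinv c (c * (q - 1)) hcq r hr)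
        (fun r hr => hinv (c * (q - 1)) c (by rwa [add_comm] at hcq) r hr)
        (fun r hr => rfl)
    have hmul : ∀ r : ℕ, e2pi ((((c : ℕ) : ℤ) * a : ℤ) / (q : ℝ)) * e2pi ((((r : ℕ) : ℤ) * a : ℤ) / (q : ℝ))
        = e2pi (((((r + c) % q : ℕ) : ℤ) * a : ℤ) / (q : ℝ)) := by
      intro r
      rw [← e2pi_add]
      have h1 : ((((c : ℕ) : ℤ) * a : ℤ) : ℝ) / q + ((((r : ℕ) : ℤ) * a : ℤ) : ℝ) / q
          = ((((r + c : ℕ) : ℤ) * a : ℤ) : ℝ) / q := by push_cast; ring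
      rw [h1]
      exact (e2pi_div_congr hq ((natmod_intModEq (r + c) q).mul_right a)).symm
    set ec := e2pi ((((c : ℕ) : ℤ) * a : ℤ) / (q : ℝ)) with hec
    have hkey : ec * (∑ r ∈ F, e2pi ((((r : ℕ) : ℤ) * a : ℤ) / (q : ℝ)))
        = ∑ r ∈ F, e2pi ((((r : ℕ) : ℤ) * a : ℤ) / (q : ℝ)) := by
      rw [Finset.mul_sum]
      rw [Finset.sum_congr rfl (fun r _ => hmul r)]
      exact hshift
    have hecne : ec ≠ 1 := by
      rw [hec]
      have hcne : (c : ℝ) ≠ 0 := Nat.cast_ne_zero.mpr hc0.ne'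
      have harg : ((((c : ℕ) : ℤ) * a : ℤ) : ℝ) / q = (a : ℝ) / p := by
        have hqr : (q : ℝ) = (c : ℝ) * p := by exact_mod_cast hcp.symm
        rw [hqr]
        push_cast
        rw [mul_div_mul_left _ _ hcne]
      rw [harg]
      intro hone
      obtain ⟨n, hn⟩ := e2pi_eq_one_iff.mp hone
      have hp' : (p : ℝ) ≠ 0 := Nat.cast_ne_zero.mpr hp.pos.ne'
      have : (a : ℝ) = n * p := by field_simp at hn; linarith
      have hdvd : (p : ℤ) ∣ a := ⟨n, by rw [mul_comm]; exact_mod_cast this⟩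
      have h2 : (p : ℤ) ∣ (Int.gcd a q : ℤ) := Int.dvd_coe_gcd hdvd (Int.natCast_dvd_natCast.mpr hpq)
      rw [ha] at h2
      have := Int.le_of_dvd one_pos h2
      have := hp.one_lt
      omega
    rw [hSr]
    have h0 : (ec - 1) * (∑ r ∈ F, e2pi ((((r : ℕ) : ℤ) * a : ℤ) / (q : ℝ))) = 0 := by
      rw [sub_mul, hkey, one_mul, sub_self]
    rcases mul_eq_zero.mp h0 with h | h
    · exact absurd (by linear_combination h : ec = 1) hecne
    · exact h
  · -- Case (ii)
    rintro ⟨hgq, hcop⟩ gbar t hgbar ht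
    have hamcop : IsCoprime a ((m : ℕ) : ℤ) :=
      (Int.isCoprime_iff_gcd_eq_one.mpr ha).of_isCoprime_of_dvd_right
        (Int.natCast_dvd_natCast.mpr hmdvd)
    have hgbarcop : IsCoprime gbar ((m : ℕ) : ℤ) := ⟨(g : ℤ), t, by linear_combination -ht⟩
    have hu : Int.gcd (a * gbar) m = 1 :=
      Int.isCoprime_iff_gcd_eq_one.mp (IsCoprime.mul_left hamcop hgbarcop)
    have hg' : (g : ℝ) ≠ 0 := Nat.cast_ne_zero.mpr hg0.ne'
    have hm' : (m : ℝ) ≠ 0 := Nat.cast_ne_zero.mpr hm0.ne'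
    have hsplit : ∀ r : ℕ, ((((r : ℕ) : ℤ) * a : ℤ) : ℝ) / q
        = ((((r : ℕ) : ℤ) * a * gbar : ℤ) : ℝ) / m + ((((r : ℕ) : ℤ) * a * t : ℤ) : ℝ) / g := by
      intro r
      have hz : ((r : ℕ) : ℤ) * a = ((r : ℕ) : ℤ) * a * gbar * g + ((r : ℕ) : ℤ) * a * t * m := by
        linear_combination ((r : ℕ) : ℤ) * a * ht
      have hzr : ((r : ℝ)) * a = (r : ℝ) * a * gbar * g + (r : ℝ) * a * t * m := by
        exact_mod_cast hz
      have hq' : (q : ℝ) = (g : ℝ) * m := by exact_mod_cast hqm.symm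
      rw [hq']
      push_cast
      field_simp
      linear_combination hzr
    rw [hSr]
    have hbij : ∑ r ∈ F, e2pi ((((r : ℕ) : ℤ) * a : ℤ) / (q : ℝ))
        = ∑ s ∈ (range m).filter (fun s => Nat.gcd s m = 1),
            e2pi (((a * (b : ℤ) * t : ℤ) : ℝ) / (g : ℝ)) * e2pi (((s : ℤ) * (a * gbar) : ℤ) / m) := by
      refine Finset.sum_bij (fun r _ => r % m) ?_ ?_ ?_ ?_
      · intro r hr
        simp only [hF, Finset.mem_filter, Finset.mem_range] at hr
        simp only [Finset.mem_filter, Finset.mem_range]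
        refine ⟨Nat.mod_lt _ hm0, ?_⟩
        rw [gcd_mod_left]
        have h1 : Nat.gcd r m ∣ Nat.gcd r q :=
          Nat.dvd_gcd (Nat.gcd_dvd_left _ _) ((Nat.gcd_dvd_right _ _).trans hmdvd)
        rw [hr.2.1] at h1
        exact Nat.dvd_one.mp h1
      · intro r1 hr1 r2 hr2 hmod
        simp only [hF, Finset.mem_filter, Finset.mem_range] at hr1 hr2
        have hgmod : r1 % g = r2 % g := by rw [hr1.2.2, hr2.2.2]
        have hqmod : r1 ≡ r2 [MOD q] := by
          rw [← hqm]
          exact (Nat.modEq_and_modEq_iff_modEq_mul hcop).mp ⟨hgmod, hmod⟩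
        have := hqmod
        unfold Nat.ModEq at this
        rw [Nat.mod_eq_of_lt hr1.1, Nat.mod_eq_of_lt hr2.1] at this
        exact this
      · intro s hs
        simp only [Finset.mem_filter, Finset.mem_range] at hs
        set R : ℤ := (b : ℤ) * (m * t) + (s : ℤ) * (g * gbar) with hR
        have hq0' : (q : ℤ) ≠ 0 := by exact_mod_cast hq.ne'
        set r : ℕ := (R % q).toNat with hr
        have hRnn : 0 ≤ R % q := Int.emod_nonneg R hq0'
        have hRlt : R % q < q := Int.emod_lt_of_pos R (by exact_mod_cast hq)
        have hrR : (r : ℤ) = R % q := Int.toNat_of_nonneg hRnn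
        have hrq : r < q := by omega
        have hrmodq : (r : ℤ) ≡ R [ZMOD (q : ℤ)] := by
          rw [hrR]
          exact Int.emod_emod_of_dvd R dvd_rfl
        have hgdvd' : ((g : ℕ) : ℤ) ∣ (q : ℤ) := Int.natCast_dvd_natCast.mpr hgdvd
        have hmdvd' : ((m : ℕ) : ℤ) ∣ (q : ℤ) := Int.natCast_dvd_natCast.mpr hmdvd
        have hrg : (r : ℤ) ≡ (b : ℤ) [ZMOD (g : ℤ)] := by
          have h1 : (r : ℤ) ≡ R [ZMOD (g : ℤ)] := hrmodq.of_dvd hgdvd'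
          refine h1.trans ?_
          have : R - (b : ℤ) = (g : ℤ) * (- (b : ℤ) * gbar + s * gbar) := by
            rw [hR]
            have hmt : (m : ℤ) * t = 1 - g * gbar := ht.symm
            linear_combination (b : ℤ) * hmt
          exact Int.modEq_iff_dvd.mpr ⟨-(- (b : ℤ) * gbar + s * gbar), by linear_combination -this⟩
        have hrm : (r : ℤ) ≡ (s : ℤ) [ZMOD (m : ℤ)] := by
          have h1 : (r : ℤ) ≡ R [ZMOD (m : ℤ)] := hrmodq.of_dvd hmdvd'
          refine h1.trans ?_
          have h2 : R ≡ (s : ℤ) * (g * gbar) [ZMOD (m : ℤ)] := by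
            have : R - (s : ℤ) * (g * gbar) = (m : ℤ) * ((b : ℤ) * t) := by rw [hR]; ring
            exact Int.modEq_iff_dvd.mpr ⟨-((b : ℤ) * t), by linear_combination -this⟩
          refine h2.trans ?_
          have h3 : (s : ℤ) * (g * gbar) ≡ (s : ℤ) * 1 [ZMOD (m : ℤ)] := hgbar.mul_left _
          simpa using h3
        have hrgnat : r % g = b % g := intModEq_natCast hrg
        have hrmnat : r % m = s % m := intModEq_natCast hrm
        have hrmnat' : r % m = s := by rw [hrmnat, Nat.mod_eq_of_lt hs.1]
        refine ⟨r, ?_, hrmnat'⟩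
        simp only [hF, Finset.mem_filter, Finset.mem_range]
        refine ⟨hrq, ?_, hrgnat⟩
        · -- gcd r q = 1
          have hrgcop : Nat.gcd r g = 1 := by
            rw [← gcd_mod_left r g, hrgnat, gcd_mod_left]
            exact hbg
          have hrmcop : Nat.gcd r m = 1 := by
            rw [← gcd_mod_left r m, hrmnat', hs.2]
          rw [← hqm]
          exact Nat.Coprime.mul_right hrgcop hrmcop
      · intro r hr
        simp only [hF, Finset.mem_filter, Finset.mem_range] at hr
        have hrb : ((r : ℕ) : ℤ) ≡ (b : ℤ) [ZMOD (g : ℤ)] := natModEq_intCast hr.2.2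
        rw [show e2pi ((((r : ℕ) : ℤ) * a : ℤ) / (q : ℝ))
            = e2pi ((((r : ℕ) : ℤ) * a * gbar : ℤ) / (m : ℝ))
              * e2pi ((((r : ℕ) : ℤ) * a * t : ℤ) / (g : ℝ)) from by
          rw [← e2pi_add, ← hsplit r]]
        rw [mul_comm]
        congr 1
        · -- e2pi (r a t / g) = e2pi (a b t / g)
          refine e2pi_div_congr hg0 ?_
          have h1 := hrb.mul_right (a * t)
          rw [show ((r : ℕ) : ℤ) * (a * t) = ((r : ℕ) : ℤ) * a * t from (mul_assoc _ _ _).symm] at h1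
          rw [show ((b : ℕ) : ℤ) * (a * t) = a * (b : ℤ) * t from by ring] at h1
          exact h1
        · -- e2pi (r a gbar / m) = e2pi ((r % m) (a gbar) / m)
          refine (e2pi_div_congr hm0 ?_).symm
          have h1 := (natmod_intModEq r m).mul_right (a * gbar)
          rw [show ((r : ℕ) : ℤ) * (a * gbar) = ((r : ℕ) : ℤ) * a * gbar from by ring] at h1
          exact h1
    rw [hbij, ← Finset.mul_sum, ramanujan_range m hm0 (a * gbar) hu, mul_comm]

end
end

section
/- Let p be a prime, y ≥ 1 an integer with p ∤ y, b any integer, t ≥ 1 an integer, and x_1 ≥ x_2 ≥ … ≥ x_t ≥ 0 integers. Then Σ_{n = 1}^{p^{x_1}} ∏_{j=1}^{t} gcd(p^{x_j}, ny + b) ≤ p^{x_1 t} · ∏_{j=1}^{t} (x_j + 1). -/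
open Finset

lemma count_le_aux (p : ℕ) (hp : p.Prime) (y : ℕ) (hpy : ¬ p ∣ y) (b : ℤ)
    (X k : ℕ) (hk : k ≤ X) :
    ((Icc 1 (p ^ X)).filter (fun n : ℕ => (p : ℤ) ^ k ∣ (n : ℤ) * (y : ℤ) + b)).card
      ≤ p ^ (X - k) := by
  have hppos : 0 < p ^ k := pow_pos hp.pos k
  have hcop : IsCoprime ((p : ℤ) ^ k) (y : ℤ) := by
    have h1 : Nat.Coprime (p ^ k) y :=
      ((Nat.Prime.coprime_iff_not_dvd hp).mpr hpy).pow_left k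
    refine Int.isCoprime_iff_gcd_eq_one.mpr ?_
    rw [← Nat.cast_pow, Int.gcd_natCast_natCast]
    exact h1
  rw [← Finset.card_range (p ^ (X - k))]
  apply Finset.card_le_card_of_injOn (fun n => (n - 1) / p ^ k)
  · intro n hn
    simp only [Finset.mem_coe, coe_filter, Set.mem_setOf_eq, mem_filter, mem_Icc] at hn
    simp only [Finset.mem_coe, Finset.coe_range, Set.mem_Iio, mem_range]
    rw [Nat.div_lt_iff_lt_mul hppos]
    have : p ^ (X - k) * p ^ k = p ^ X := by
      rw [← pow_add, Nat.sub_add_cancel hk]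
    rw [this]
    omega
  · intro n1 hn1 n2 hn2 h
    simp only [coe_filter, Set.mem_setOf_eq, mem_Icc] at hn1 hn2
    -- p^k divides (n1 - n2) * y, hence p^k ∣ n1 - n2 in ℤ
    have hdvd : ((p : ℤ) ^ k) ∣ ((n1 : ℤ) - (n2 : ℤ)) := by
      have hsub : ((p : ℤ) ^ k) ∣ ((n1 : ℤ) * y + b) - ((n2 : ℤ) * y + b) :=
        dvd_sub hn1.2 hn2.2
      have heq : ((n1 : ℤ) * y + b) - ((n2 : ℤ) * y + b) = ((n1 : ℤ) - n2) * y := by ring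
      rw [heq] at hsub
      exact hcop.dvd_of_dvd_mul_right hsub
    -- from equal quotients, |n1 - n2| < p^k
    have habs : (n1 : ℤ) - (n2 : ℤ) = 0 := by
      apply Int.eq_zero_of_abs_lt_dvd hdvd
      have h1 : p ^ k * ((n1 - 1) / p ^ k) ≤ n1 - 1 := Nat.mul_div_le _ _
      have h2 : p ^ k * ((n2 - 1) / p ^ k) ≤ n2 - 1 := Nat.mul_div_le _ _
      have h3 : n1 - 1 < p ^ k * ((n1 - 1) / p ^ k) + p ^ k :=
        Nat.lt_mul_div_succ _ hppos |>.trans_le (by rw [Nat.mul_succ])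
      have h4 : n2 - 1 < p ^ k * ((n2 - 1) / p ^ k) + p ^ k :=
        Nat.lt_mul_div_succ _ hppos |>.trans_le (by rw [Nat.mul_succ])
      simp only at h
      rw [h] at h1 h3
      have hb1 := hn1.1.1
      have hb2 := hn2.1.1
      rw [← Nat.cast_pow, abs_sub_lt_iff]
      constructor <;> omega
    omega

theorem prime_power_gcd_sum (p : ℕ) (hp : p.Prime) (y : ℕ) (hy : 1 ≤ y) (hpy : ¬ p ∣ y)
    (b : ℤ) (t : ℕ) (ht : 1 ≤ t) (x : ℕ → ℕ) (hx : ∀ i j, i ≤ j → j < t → x j ≤ x i) :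
    ∑ n ∈ Finset.Icc 1 (p ^ x 0),
        ∏ j ∈ Finset.range t, Int.gcd ((p : ℤ) ^ x j) ((n : ℤ) * (y : ℤ) + b) ≤
      p ^ (x 0 * t) * ∏ j ∈ Finset.range t, (x j + 1) := by
  set X := x 0 with hXdef
  have hx0 : ∀ j, j < t → x j ≤ X := fun j hj => hx 0 j (Nat.zero_le j) hj
  -- pointwise bound
  have step1 : ∀ n ∈ Icc 1 (p ^ X),
      (∏ j ∈ range t, Int.gcd ((p : ℤ) ^ x j) ((n : ℤ) * (y : ℤ) + b))
        ≤ ∑ k ∈ range (X + 1),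
            if (p : ℤ) ^ k ∣ (n : ℤ) * (y : ℤ) + b then p ^ (k * t) else 0 := by
    intro n _
    set c : ℤ := (n : ℤ) * (y : ℤ) + b with hc
    have hA : ∀ j ∈ range t, Int.gcd ((p : ℤ) ^ x j) c ≤ Int.gcd ((p : ℤ) ^ X) c := by
      intro j hj
      rw [mem_range] at hj
      have hdvd : Int.gcd ((p : ℤ) ^ x j) c ∣ Int.gcd ((p : ℤ) ^ X) c := by
        simp only [Int.gcd]
        apply Nat.dvd_gcd
        · refine (Nat.gcd_dvd_left _ _).trans ?_
          simp only [Int.natAbs_pow]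
          exact pow_dvd_pow _ (by simpa using hx0 j hj)
        · exact Nat.gcd_dvd_right _ _
      exact Nat.le_of_dvd (Int.gcd_pos_of_ne_zero_left c (pow_ne_zero _ (by exact_mod_cast hp.pos.ne'))) hdvd
    have hB : (∏ j ∈ range t, Int.gcd ((p : ℤ) ^ x j) c)
        ≤ Int.gcd ((p : ℤ) ^ X) c ^ t := by
      calc (∏ j ∈ range t, Int.gcd ((p : ℤ) ^ x j) c)
          ≤ ∏ _j ∈ range t, Int.gcd ((p : ℤ) ^ X) c :=
            Finset.prod_le_prod' hA
        _ = Int.gcd ((p : ℤ) ^ X) c ^ t := by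
            rw [Finset.prod_const, card_range]
    refine hB.trans ?_
    -- gcd = p^k0 for some k0 ≤ X with p^k0 ∣ c
    have hgdvd : Int.gcd ((p : ℤ) ^ X) c ∣ p ^ X := by
      have h : (↑(((p : ℤ) ^ X).gcd c) : ℤ) ∣ (p : ℤ) ^ X := Int.gcd_dvd_left _ _
      exact_mod_cast h
    obtain ⟨k0, hk0, hgcd⟩ := (Nat.dvd_prime_pow hp).mp hgdvd
    have hdvdc : (p : ℤ) ^ k0 ∣ c := by
      have h : (↑(((p : ℤ) ^ X).gcd c) : ℤ) ∣ c := Int.gcd_dvd_right _ _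
      rw [hgcd] at h
      exact_mod_cast h
    have hsingle := Finset.single_le_sum
      (f := fun k => if (p : ℤ) ^ k ∣ c then p ^ (k * t) else 0)
      (fun i _ => Nat.zero_le _) (mem_range.mpr (Nat.lt_succ_of_le hk0))
    calc Int.gcd ((p : ℤ) ^ X) c ^ t = p ^ (k0 * t) := by rw [hgcd, ← pow_mul]
      _ ≤ _ := by simpa [hdvdc] using hsingle
  calc ∑ n ∈ Icc 1 (p ^ X),
        ∏ j ∈ range t, Int.gcd ((p : ℤ) ^ x j) ((n : ℤ) * (y : ℤ) + b)
      ≤ ∑ n ∈ Icc 1 (p ^ X), ∑ k ∈ range (X + 1),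
          if (p : ℤ) ^ k ∣ (n : ℤ) * (y : ℤ) + b then p ^ (k * t) else 0 :=
        Finset.sum_le_sum step1
    _ = ∑ k ∈ range (X + 1), ∑ n ∈ Icc 1 (p ^ X),
          if (p : ℤ) ^ k ∣ (n : ℤ) * (y : ℤ) + b then p ^ (k * t) else 0 :=
        Finset.sum_comm
    _ = ∑ k ∈ range (X + 1),
          ((Icc 1 (p ^ X)).filter
            (fun n : ℕ => (p : ℤ) ^ k ∣ (n : ℤ) * (y : ℤ) + b)).card * p ^ (k * t) := by
        refine Finset.sum_congr rfl fun k _ => ?_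
        rw [← Finset.sum_filter, Finset.sum_const, smul_eq_mul]
    _ ≤ ∑ k ∈ range (X + 1), p ^ (X - k) * p ^ (k * t) := by
        refine Finset.sum_le_sum fun k hk => ?_
        exact Nat.mul_le_mul_right _
          (count_le_aux p hp y hpy b X k (Nat.lt_succ_iff.mp (mem_range.mp hk)))
    _ ≤ ∑ _k ∈ range (X + 1), p ^ (X * t) := by
        refine Finset.sum_le_sum fun k hk => ?_
        have hkX : k ≤ X := Nat.lt_succ_iff.mp (mem_range.mp hk)
        rw [← pow_add]
        apply Nat.pow_le_pow_right hp.pos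
        have h1 : X - k ≤ (X - k) * t := Nat.le_mul_of_pos_right _ ht
        have h2 : (X - k) * t + k * t = X * t := by
          rw [← Nat.add_mul, Nat.sub_add_cancel hkX]
        omega
    _ = (X + 1) * p ^ (X * t) := by rw [Finset.sum_const, card_range, smul_eq_mul]
    _ ≤ p ^ (X * t) * ∏ j ∈ range t, (x j + 1) := by
        rw [mul_comm]
        apply Nat.mul_le_mul_left
        have h0 : (0 : ℕ) ∈ range t := mem_range.mpr ht
        have := Finset.single_le_prod' (f := fun j => x j + 1)
          (fun i _ => Nat.succ_le_succ (Nat.zero_le _)) h0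
        simpa using this
end

section
/- For every ε > 0 and every integer t ≥ 1 there is a constant C = C(ε,t) > 0 such that for all integers y ≥ 1 and b with gcd(b,y) = 1, every integer Q ≥ 1, and every tuple (q_1, …, q_t) of integers in [1,Q] with gcd(q_j, y) = 1 for all j, one has Σ_{n ≤ L} ∏_{j=1}^{t} gcd(q_j, ny + b) ≤ C · Q^{t+ε}, where L = lcm(q_1, …, q_t). -/
-- lcm of nonzero is nonzero
lemma aux_lcm_ne_zero {S : Finset ℕ} {q : ℕ → ℕ} (hq : ∀ j ∈ S, q j ≠ 0) :
    S.lcm q ≠ 0 := by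
  rw [Ne, Finset.lcm_eq_zero_iff]
  rintro ⟨j, hj, h⟩
  exact hq j hj h

-- the p-adic valuation of a finset lcm is attained
lemma aux_lcm_fact_attained {S : Finset ℕ} (hS : S.Nonempty) {q : ℕ → ℕ}
    (hq : ∀ j ∈ S, q j ≠ 0) (p : ℕ) :
    ∃ j ∈ S, (S.lcm q).factorization p ≤ (q j).factorization p := by
  classical
  induction hS using Finset.Nonempty.cons_induction with
  | singleton a => exact ⟨a, Finset.mem_singleton_self a, by simp⟩
  | cons a s ha hs ih =>
    have hqs : ∀ j ∈ s, q j ≠ 0 := fun j hj => hq j (Finset.mem_cons_of_mem hj)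
    have hM : s.lcm q ≠ 0 := aux_lcm_ne_zero hqs
    have hqa : q a ≠ 0 := hq a (Finset.mem_cons_self a s)
    rw [Finset.cons_eq_insert, Finset.lcm_insert]
    rw [show lcm (q a) (s.lcm q) = Nat.lcm (q a) (s.lcm q) from rfl, Nat.factorization_lcm hqa hM]
    rw [Finsupp.sup_apply]
    rcases le_total ((q a).factorization p) ((s.lcm q).factorization p) with h | h
    · obtain ⟨j, hj, hj2⟩ := ih hqs
      exact ⟨j, Finset.mem_insert_of_mem hj, by simpa [max_eq_right h] using hj2⟩
    · exact ⟨a, Finset.mem_insert_self a s, by simp [max_eq_left h]⟩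
-- key arithmetic lemma: (∏ gcd(q j, D)) * lcm q ∣ (∏ q j) * D for D ∣ lcm q
lemma aux_key_dvd {S : Finset ℕ} {q : ℕ → ℕ} (hq : ∀ j ∈ S, q j ≠ 0) {D : ℕ}
    (hD : D ≠ 0)
    (hDL : D ∣ S.lcm q) (haux : ∀ p : ℕ, ∃ j ∈ S, (S.lcm q).factorization p ≤ (q j).factorization p)
    (hL : S.lcm q ≠ 0) :
    (∏ j ∈ S, Nat.gcd (q j) D) * S.lcm q ∣ (∏ j ∈ S, q j) * D := by
  have hgcd0 : ∀ j ∈ S, Nat.gcd (q j) D ≠ 0 := fun j hj => Nat.gcd_ne_zero_left (hq j hj)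
  have hP : (∏ j ∈ S, Nat.gcd (q j) D) ≠ 0 := Finset.prod_ne_zero_iff.mpr hgcd0
  have hQ : (∏ j ∈ S, q j) ≠ 0 := Finset.prod_ne_zero_iff.mpr hq
  rw [← Nat.factorization_le_iff_dvd (mul_ne_zero hP hL) (mul_ne_zero hQ hD), Finsupp.le_def]
  intro p
  obtain ⟨j₀, hj₀, hj₀le⟩ := haux p
  have hle : D.factorization p ≤ (S.lcm q).factorization p := by
    have := (Nat.factorization_le_iff_dvd hD hL).mpr hDL
    exact this p
  rw [Nat.factorization_mul hP hL, Nat.factorization_mul hQ hD,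
    Nat.factorization_prod hgcd0, Nat.factorization_prod hq]
  simp only [Finsupp.add_apply, Finsupp.finset_sum_apply]
  have hfg : ∀ j ∈ S, (Nat.gcd (q j) D).factorization p
      = min ((q j).factorization p) (D.factorization p) := by
    intro j hj
    rw [Nat.factorization_gcd (hq j hj) hD, Finsupp.inf_apply]
  rw [Finset.sum_congr rfl hfg]
  rw [← Finset.add_sum_erase _ _ hj₀, ← Finset.add_sum_erase _ (fun j => (q j).factorization p) hj₀]
  have hsum : ∑ j ∈ S.erase j₀, min ((q j).factorization p) (D.factorization p)
      ≤ ∑ j ∈ S.erase j₀, (q j).factorization p :=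
    Finset.sum_le_sum fun j _ => min_le_left _ _
  omega

-- counting lemma
lemma aux_count {L d y : ℕ} {b : ℤ} (hd : d ≠ 0) (hdL : d ∣ L) (hL : L ≠ 0)
    (hco : Nat.Coprime d y) :
    ((Finset.Icc 1 L).filter (fun n : ℕ => (d:ℤ) ∣ ((n:ℤ) * y + b))).card ≤ L / d := by
  have hd0 : 0 < d := Nat.pos_of_ne_zero hd
  rw [← Finset.card_range (L/d)]
  apply Finset.card_le_card_of_injOn (fun n => (n - 1) / d)
  · intro n hn
    simp only [Finset.mem_coe, Finset.mem_filter, Finset.mem_Icc] at hn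
    simp only [Finset.mem_coe, Finset.mem_range]
    rw [Nat.div_lt_iff_lt_mul hd0]
    have : L / d * d = L := Nat.div_mul_cancel hdL
    omega
  · intro n hn n' hn' hdiv
    simp only [Finset.coe_filter, Set.mem_setOf_eq, Finset.mem_Icc] at hn hn'
    -- d divides (n - n') * y over ℤ
    have h1 : (d:ℤ) ∣ ((n':ℤ) - n) * y := by
      have := dvd_sub hn'.2 hn.2
      have e : ((n':ℤ) * y + b) - ((n:ℤ) * y + b) = ((n':ℤ) - n) * y := by ring
      rwa [e] at this
    have hcop : IsCoprime (d:ℤ) (y:ℤ) := by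
      rw [Int.isCoprime_iff_gcd_eq_one, Int.gcd_natCast_natCast]
      exact hco
    have h2 : (d:ℤ) ∣ ((n':ℤ) - n) := hcop.dvd_of_dvd_mul_right h1
    -- bound |n - n'| < d using equal quotients
    have e1 := Nat.div_add_mod (n - 1) d
    have e2 := Nat.div_add_mod (n' - 1) d
    simp only at hdiv
    rw [hdiv] at e1
    have hr : (n - 1) % d < d := Nat.mod_lt _ hd0
    have hr' : (n' - 1) % d < d := Nat.mod_lt _ hd0
    rcases le_total n n' with h | h
    · have h3 : d ∣ n' - n := by zify [h]; exact h2
      have h4 : n' - n < d := by omega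
      have := Nat.eq_zero_of_dvd_of_lt h3
      omega
    · have h3 : d ∣ n - n' := by zify [h]; simpa using dvd_neg.mpr h2
      have h4 : n - n' < d := by omega
      have := Nat.eq_zero_of_dvd_of_lt h3
      omega
lemma aux_gcd_sum {L y : ℕ} (b : ℤ) (hL : L ≠ 0) (hco : ∀ d, d ∣ L → Nat.Coprime d y) :
    ∑ n ∈ Finset.Icc 1 L, Nat.gcd L ((n : ℤ) * y + b).natAbs ≤ L.divisors.card * L := by
  have hterm : ∀ n : ℕ, Nat.gcd L ((n : ℤ) * y + b).natAbs
      = ∑ d ∈ L.divisors, if (d:ℤ) ∣ ((n:ℤ) * y + b) then d.totient else 0 := by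
    intro n
    rw [← Finset.sum_filter]
    rw [← Nat.sum_totient (Nat.gcd L ((n : ℤ) * y + b).natAbs)]
    apply Finset.sum_congr _ (fun _ _ => rfl)
    ext d
    simp only [Nat.mem_divisors, Finset.mem_filter, Nat.dvd_gcd_iff, Int.natCast_dvd]
    constructor
    · rintro ⟨⟨h1, h2⟩, -⟩; exact ⟨⟨h1, hL⟩, h2⟩
    · rintro ⟨⟨h1, -⟩, h2⟩
      refine ⟨⟨h1, h2⟩, ?_⟩
      exact fun hg => hL (Nat.eq_zero_of_gcd_eq_zero_left hg)
  calc ∑ n ∈ Finset.Icc 1 L, Nat.gcd L ((n : ℤ) * y + b).natAbs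
      = ∑ n ∈ Finset.Icc 1 L, ∑ d ∈ L.divisors,
          if (d:ℤ) ∣ ((n:ℤ) * y + b) then d.totient else 0 := by
        exact Finset.sum_congr rfl fun n _ => hterm n
    _ = ∑ d ∈ L.divisors, ∑ n ∈ Finset.Icc 1 L,
          if (d:ℤ) ∣ ((n:ℤ) * y + b) then d.totient else 0 := Finset.sum_comm
    _ ≤ ∑ d ∈ L.divisors, L := by
        apply Finset.sum_le_sum
        intro d hd
        rw [Nat.mem_divisors] at hd
        have hd0 : d ≠ 0 := by rintro rfl; exact hL (Nat.eq_zero_of_zero_dvd hd.1)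
        rw [← Finset.sum_filter, Finset.sum_const, smul_eq_mul]
        have hcard := aux_count (L := L) (b := b) hd0 hd.1 hL (hco d hd.1)
        calc ((Finset.Icc 1 L).filter (fun n : ℕ => (d:ℤ) ∣ ((n:ℤ) * y + b))).card * d.totient
            ≤ (L / d) * d := Nat.mul_le_mul hcard (Nat.totient_le d)
          _ = L := Nat.div_mul_cancel hd.1
    _ = L.divisors.card * L := by rw [Finset.sum_const, smul_eq_mul]

lemma aux_nat_ineq {k : ℕ} (hk : 1 ≤ k) (a : ℕ) : a + 1 ≤ 2 ^ k * 2 ^ (a / k) := by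
  have h1 : k + 1 ≤ 2 ^ k := Nat.lt_two_pow_self (n := k)
  have h2 : a / k + 1 ≤ 2 ^ (a / k) := Nat.lt_two_pow_self
  calc a + 1 ≤ a / k * k + k := Nat.lt_div_mul_add hk
    _ = (a / k + 1) * k := by ring
    _ ≤ (a / k + 1) * (k + 1) := Nat.mul_le_mul_left _ (Nat.le_succ k)
    _ ≤ 2 ^ (a / k) * 2 ^ k := Nat.mul_le_mul h2 h1
    _ = 2 ^ k * 2 ^ (a / k) := mul_comm _ _

-- per-prime bound: a + 1 ≤ c_p * (p^a)^(1/k)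
lemma aux_prime_factor_bound {k p a : ℕ} (hk : 1 ≤ k) (hp : 2 ≤ p) :
    ((a : ℝ) + 1) ≤ (if p < 2 ^ k then ((2 : ℝ) ^ k) else 1) *
      (((p : ℝ) ^ a) ^ ((1 : ℝ) / k)) := by
  have hk0 : (k : ℝ) ≠ 0 := Nat.cast_ne_zero.mpr (by omega)
  have h2a : ((2 : ℝ) ^ a) ^ ((1 : ℝ) / k) ≤ ((p : ℝ) ^ a) ^ ((1 : ℝ) / k) := by
    apply Real.rpow_le_rpow (by positivity) _ (by positivity)
    exact pow_le_pow_left₀ (by norm_num) (by exact_mod_cast hp) a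
  split_ifs with hlt
  · -- small prime: a + 1 ≤ 2^k * 2^(a/k : ℕ) ≤ 2^k * (2^a)^(1/k)
    have hnat := aux_nat_ineq hk a
    have hfloor : ((2 : ℝ) ^ (a / k)) ≤ ((2 : ℝ) ^ a) ^ ((1 : ℝ) / k) := by
      rw [← Real.rpow_natCast (2 : ℝ) (a / k), ← Real.rpow_natCast (2 : ℝ) a,
        ← Real.rpow_mul (by norm_num)]
      apply Real.rpow_le_rpow_of_exponent_le (by norm_num)
      rw [mul_one_div, le_div_iff₀ (by positivity)]
      exact_mod_cast Nat.div_mul_le_self a k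
    calc ((a : ℝ) + 1) ≤ (2 : ℝ) ^ k * 2 ^ (a / k) := by exact_mod_cast hnat
      _ ≤ (2 : ℝ) ^ k * ((2 : ℝ) ^ a) ^ ((1 : ℝ) / k) := by
          exact mul_le_mul_of_nonneg_left hfloor (by positivity)
      _ ≤ (2 : ℝ) ^ k * ((p : ℝ) ^ a) ^ ((1 : ℝ) / k) := by
          exact mul_le_mul_of_nonneg_left h2a (by positivity)
  · -- large prime: p ≥ 2^k, so (p^a)^(1/k) ≥ 2^a ≥ a+1
    push_neg at hlt
    have hbig : ((2 : ℝ) ^ a) ≤ ((p : ℝ) ^ a) ^ ((1 : ℝ) / k) := by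
      have h1 : (((2 : ℝ) ^ k) ^ a) ^ ((1 : ℝ) / k) ≤ ((p : ℝ) ^ a) ^ ((1 : ℝ) / k) := by
        apply Real.rpow_le_rpow (by positivity) _ (by positivity)
        apply pow_le_pow_left₀ (by positivity)
        exact_mod_cast hlt
      calc ((2 : ℝ) ^ a) = (((2 : ℝ) ^ k) ^ a) ^ ((1 : ℝ) / k) := by
            rw [← pow_mul, ← Real.rpow_natCast (2 : ℝ) (k * a), ← Real.rpow_mul (by norm_num)]
            rw [← Real.rpow_natCast (2 : ℝ) a]
            congr 1
            push_cast
            field_simp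
        _ ≤ ((p : ℝ) ^ a) ^ ((1 : ℝ) / k) := h1
    have h2 : ((a : ℝ) + 1) ≤ (2 : ℝ) ^ a := by
      exact_mod_cast Nat.lt_two_pow_self (n := a)
    rw [one_mul]
    linarith

lemma aux_divisor_bound_k {k : ℕ} (hk : 1 ≤ k) {n : ℕ} (hn : n ≠ 0) :
    (n.divisors.card : ℝ) ≤ ((2 : ℝ) ^ k) ^ (2 ^ k) * (n : ℝ) ^ ((1 : ℝ) / k) := by
  have hcard := Nat.card_divisors hn
  have step1 : (n.divisors.card : ℝ)
      = ∏ p ∈ n.primeFactors, ((n.factorization p : ℝ) + 1) := by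
    rw [hcard]; push_cast; rfl
  have step2 : (n.divisors.card : ℝ) ≤ ∏ p ∈ n.primeFactors,
      (if p < 2 ^ k then ((2 : ℝ) ^ k) else 1) *
        (((p : ℝ) ^ (n.factorization p)) ^ ((1 : ℝ) / k)) := by
    rw [step1]
    apply Finset.prod_le_prod
    · intro p _; positivity
    · intro p hp
      exact aux_prime_factor_bound hk (Nat.Prime.two_le (Nat.prime_of_mem_primeFactors hp))
  rw [Finset.prod_mul_distrib] at step2
  -- bound the constant product
  have hconst : (∏ p ∈ n.primeFactors, if p < 2 ^ k then ((2 : ℝ) ^ k) else 1)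
      ≤ ((2 : ℝ) ^ k) ^ (2 ^ k) := by
    classical
    rw [Finset.prod_ite, Finset.prod_const, Finset.prod_const, one_pow, mul_one]
    have hsub : n.primeFactors.filter (fun p => p < 2 ^ k) ⊆ Finset.range (2 ^ k) := by
      intro p hp
      rw [Finset.mem_range]
      exact (Finset.mem_filter.mp hp).2
    have hcard2 : (n.primeFactors.filter (fun p => p < 2 ^ k)).card ≤ 2 ^ k := by
      simpa using Finset.card_le_card hsub
    exact pow_le_pow_right₀ (one_le_pow₀ (by norm_num)) hcard2
  -- the rpow product equals n^(1/k)
  have hprod : (∏ p ∈ n.primeFactors, ((p : ℝ) ^ (n.factorization p)) ^ ((1 : ℝ) / k))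
      = (n : ℝ) ^ ((1 : ℝ) / k) := by
    rw [Real.finset_prod_rpow _ _ (fun p _ => by positivity)]
    congr 1
    have : ∏ p ∈ n.primeFactors, (p : ℕ) ^ n.factorization p = n := by
      rw [Nat.prod_primeFactors_prod_factorization]
      exact Nat.factorization_prod_pow_eq_self hn
    calc ∏ p ∈ n.primeFactors, ((p : ℝ)) ^ n.factorization p
        = ((∏ p ∈ n.primeFactors, p ^ n.factorization p : ℕ) : ℝ) := by push_cast; rfl
      _ = (n : ℝ) := by rw [this]
  rw [hprod] at step2
  calc (n.divisors.card : ℝ)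
      ≤ (∏ p ∈ n.primeFactors, if p < 2 ^ k then ((2 : ℝ) ^ k) else 1)
        * (n : ℝ) ^ ((1 : ℝ) / k) := step2
    _ ≤ ((2 : ℝ) ^ k) ^ (2 ^ k) * (n : ℝ) ^ ((1 : ℝ) / k) := by
        apply mul_le_mul_of_nonneg_right hconst (by positivity)

lemma aux_divisor_bound {ε : ℝ} (hε : 0 < ε) :
    ∃ C : ℝ, 0 < C ∧ ∀ n : ℕ, n ≠ 0 → (n.divisors.card : ℝ) ≤ C * (n : ℝ) ^ ε := by
  obtain ⟨k, hk1, hk⟩ : ∃ k : ℕ, 1 ≤ k ∧ (1 : ℝ) / k ≤ ε := by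
    obtain ⟨k, hk⟩ := exists_nat_gt (1 / ε)
    refine ⟨k + 1, by omega, ?_⟩
    rw [div_le_iff₀ (by positivity)]
    rw [div_lt_iff₀ hε] at hk
    have : (k : ℝ) ≤ (k + 1 : ℕ) := by push_cast; linarith
    nlinarith
  refine ⟨((2 : ℝ) ^ k) ^ (2 ^ k), by positivity, fun n hn => ?_⟩
  calc (n.divisors.card : ℝ) ≤ ((2 : ℝ) ^ k) ^ (2 ^ k) * (n : ℝ) ^ ((1 : ℝ) / k) :=
        aux_divisor_bound_k hk1 hn
    _ ≤ ((2 : ℝ) ^ k) ^ (2 ^ k) * (n : ℝ) ^ ε := by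
        apply mul_le_mul_of_nonneg_left _ (by positivity)
        apply Real.rpow_le_rpow_of_exponent_le _ hk
        exact_mod_cast Nat.one_le_iff_ne_zero.mpr hn

theorem gcd_sum_over_lcm_period :
    ∀ ε : ℝ, 0 < ε → ∀ t : ℕ, 1 ≤ t →
      ∃ C : ℝ, 0 < C ∧
        ∀ y : ℕ, 1 ≤ y → ∀ b : ℤ, Int.gcd b y = 1 → ∀ Q : ℕ, 1 ≤ Q →
          ∀ q : ℕ → ℕ, (∀ j < t, 1 ≤ q j ∧ q j ≤ Q ∧ Nat.gcd (q j) y = 1) →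
            ((∑ n ∈ Finset.Icc 1 ((Finset.range t).lcm q),
                ∏ j ∈ Finset.range t, Int.gcd ((q j : ℤ)) ((n : ℤ) * (y : ℤ) + b) : ℕ) : ℝ) ≤
              C * (Q : ℝ) ^ ((t : ℝ) + ε) := by
  intro ε hε t ht
  have hεt : 0 < ε / t := div_pos hε (by exact_mod_cast ht)
  obtain ⟨C₀, hC₀, hdiv⟩ := aux_divisor_bound hεt
  refine ⟨C₀, hC₀, ?_⟩
  intro y hy b hb Q hQ q hqh
  set L := (Finset.range t).lcm q with hLdef
  have hq0 : ∀ j ∈ Finset.range t, q j ≠ 0 := by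
    intro j hj
    rw [Finset.mem_range] at hj
    exact Nat.one_le_iff_ne_zero.mp (hqh j hj).1
  have hL0 : L ≠ 0 := aux_lcm_ne_zero hq0
  have hqdvdL : ∀ j ∈ Finset.range t, q j ∣ L := fun j hj => Finset.dvd_lcm hj
  have hLdvdP : L ∣ ∏ j ∈ Finset.range t, q j :=
    Finset.lcm_dvd fun j hj => Finset.dvd_prod_of_mem q hj
  have hP0 : (∏ j ∈ Finset.range t, q j) ≠ 0 := Finset.prod_ne_zero_iff.mpr hq0
  -- coprimality of divisors of L with y
  have hco : ∀ d, d ∣ L → Nat.Coprime d y := by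
    intro d hd
    have hPy : Nat.Coprime (∏ j ∈ Finset.range t, q j) y :=
      Nat.Coprime.prod_left fun j hj => (hqh j (Finset.mem_range.mp hj)).2.2
    exact Nat.Coprime.coprime_dvd_left (hd.trans hLdvdP) hPy
  -- step 1: pointwise bound
  have hpoint : ∀ n : ℕ,
      (∏ j ∈ Finset.range t, Int.gcd ((q j : ℤ)) ((n : ℤ) * (y : ℤ) + b)) * L ≤
      (∏ j ∈ Finset.range t, q j) * Nat.gcd L ((n : ℤ) * (y : ℤ) + b).natAbs := by
    intro n
    set m : ℤ := (n : ℤ) * (y : ℤ) + b with hm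
    set g : ℕ → ℕ := fun j => Int.gcd ((q j : ℤ)) m with hg
    have hgq : ∀ j ∈ Finset.range t, g j ∣ q j := by
      intro j hj
      have := Int.gcd_dvd_left (a := (q j : ℤ)) (b := m)
      exact_mod_cast this
    have hgm : ∀ j ∈ Finset.range t, g j ∣ m.natAbs := by
      intro j hj
      have := Int.gcd_dvd_right (a := (q j : ℤ)) (b := m)
      exact Int.natCast_dvd.mp this
    have hg0 : ∀ j ∈ Finset.range t, g j ≠ 0 := by
      intro j hj h
      rw [hg] at h
      simp only [Int.gcd_eq_zero_iff] at h
      exact hq0 j hj (by exact_mod_cast h.1)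
    set D : ℕ := (Finset.range t).lcm g with hD
    have hD0 : D ≠ 0 := aux_lcm_ne_zero hg0
    have hDL : D ∣ L := Finset.lcm_dvd fun j hj => (hgq j hj).trans (hqdvdL j hj)
    have hDgcd : D ∣ Nat.gcd L m.natAbs :=
      Nat.dvd_gcd hDL (Finset.lcm_dvd fun j hj => hgm j hj)
    have haux : ∀ p : ℕ, ∃ j ∈ Finset.range t, L.factorization p ≤ (q j).factorization p := by
      intro p
      exact aux_lcm_fact_attained ⟨0, Finset.mem_range.mpr (by omega)⟩ hq0 p
    have hkey := aux_key_dvd hq0 hD0 hDL haux hL0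
    have hgcdpos : 0 < Nat.gcd L m.natAbs := Nat.pos_of_ne_zero fun h =>
      hL0 (Nat.eq_zero_of_gcd_eq_zero_left h)
    calc (∏ j ∈ Finset.range t, g j) * L
        ≤ (∏ j ∈ Finset.range t, Nat.gcd (q j) D) * L := by
          apply Nat.mul_le_mul_right
          apply Finset.prod_le_prod' -- maybe wrong name
          intro j hj
          exact Nat.le_of_dvd (Nat.pos_of_ne_zero (Nat.gcd_ne_zero_left (hq0 j hj)))
            (Nat.dvd_gcd (hgq j hj) (Finset.dvd_lcm hj))
      _ ≤ (∏ j ∈ Finset.range t, q j) * D :=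
          Nat.le_of_dvd (Nat.pos_of_ne_zero (mul_ne_zero hP0 hD0)) hkey
      _ ≤ (∏ j ∈ Finset.range t, q j) * Nat.gcd L m.natAbs :=
          Nat.mul_le_mul_left _ (Nat.le_of_dvd hgcdpos hDgcd)
  -- step 2: sum the pointwise bound
  have hsum : (∑ n ∈ Finset.Icc 1 L,
      ∏ j ∈ Finset.range t, Int.gcd ((q j : ℤ)) ((n : ℤ) * (y : ℤ) + b)) * L ≤
      (∏ j ∈ Finset.range t, q j) * (L.divisors.card * L) := by
    rw [Finset.sum_mul]
    calc ∑ n ∈ Finset.Icc 1 L,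
          (∏ j ∈ Finset.range t, Int.gcd ((q j : ℤ)) ((n : ℤ) * (y : ℤ) + b)) * L
        ≤ ∑ n ∈ Finset.Icc 1 L,
          (∏ j ∈ Finset.range t, q j) * Nat.gcd L ((n : ℤ) * (y : ℤ) + b).natAbs :=
          Finset.sum_le_sum fun n _ => hpoint n
      _ = (∏ j ∈ Finset.range t, q j) *
          ∑ n ∈ Finset.Icc 1 L, Nat.gcd L ((n : ℤ) * (y : ℤ) + b).natAbs := by
          rw [Finset.mul_sum]
      _ ≤ (∏ j ∈ Finset.range t, q j) * (L.divisors.card * L) :=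
          Nat.mul_le_mul_left _ (aux_gcd_sum b hL0 hco)
  have hmain : (∑ n ∈ Finset.Icc 1 L,
      ∏ j ∈ Finset.range t, Int.gcd ((q j : ℤ)) ((n : ℤ) * (y : ℤ) + b)) ≤
      (∏ j ∈ Finset.range t, q j) * L.divisors.card := by
    apply Nat.le_of_mul_le_mul_right _ (Nat.pos_of_ne_zero hL0)
    calc (∑ n ∈ Finset.Icc 1 L,
          ∏ j ∈ Finset.range t, Int.gcd ((q j : ℤ)) ((n : ℤ) * (y : ℤ) + b)) * L
        ≤ (∏ j ∈ Finset.range t, q j) * (L.divisors.card * L) := hsum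
      _ = (∏ j ∈ Finset.range t, q j) * L.divisors.card * L := by ring
  -- step 3: cast to ℝ and conclude
  have hPQ : (∏ j ∈ Finset.range t, q j) ≤ Q ^ t := by
    calc (∏ j ∈ Finset.range t, q j) ≤ ∏ j ∈ Finset.range t, Q :=
          Finset.prod_le_prod' fun j hj => (hqh j (Finset.mem_range.mp hj)).2.1
      _ = Q ^ t := by rw [Finset.prod_const, Finset.card_range]
  have hLQ : L ≤ Q ^ t := le_trans (Nat.le_of_dvd (Nat.pos_of_ne_zero hP0) hLdvdP) hPQ
  have hQ0 : (0 : ℝ) < (Q : ℝ) := by exact_mod_cast hQ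
  have ht0 : (t : ℝ) ≠ 0 := Nat.cast_ne_zero.mpr (by omega)
  have hτ : (L.divisors.card : ℝ) ≤ C₀ * (Q : ℝ) ^ ε := by
    calc (L.divisors.card : ℝ) ≤ C₀ * (L : ℝ) ^ (ε / t) := hdiv L hL0
      _ ≤ C₀ * ((Q : ℝ) ^ (t : ℕ)) ^ (ε / t) := by
          apply mul_le_mul_of_nonneg_left _ (le_of_lt hC₀)
          apply Real.rpow_le_rpow (by positivity) _ (le_of_lt hεt)
          exact_mod_cast hLQ
      _ = C₀ * (Q : ℝ) ^ ε := by
          rw [← Real.rpow_natCast (Q : ℝ) t, ← Real.rpow_mul (le_of_lt hQ0)]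
          congr 2
          field_simp
  calc ((∑ n ∈ Finset.Icc 1 L,
        ∏ j ∈ Finset.range t, Int.gcd ((q j : ℤ)) ((n : ℤ) * (y : ℤ) + b) : ℕ) : ℝ)
      ≤ ((∏ j ∈ Finset.range t, q j : ℕ) : ℝ) * ((L.divisors.card : ℕ) : ℝ) := by
        exact_mod_cast hmain
    _ ≤ ((Q : ℝ) ^ (t : ℕ)) * (C₀ * (Q : ℝ) ^ ε) := by
        apply mul_le_mul (by exact_mod_cast hPQ) hτ (by positivity) (by positivity)
    _ = C₀ * (Q : ℝ) ^ ((t : ℝ) + ε) := by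
        rw [Real.rpow_add hQ0, Real.rpow_natCast]
        ring
end
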